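/- Let H be a complex Hilbert space and let G ⊆ B(H) be a finite-dimensional real Lie algebra of bounded skew-adjoint operators on H (with bracket the commutator [A,B] = AB − BA). Suppose M ∈ G is essential in G, and let φ ∈ H satisfy exp(tM)φ = φ for all t ∈ ℝ. Then exp(N)φ = φ for every N ∈ G. -/

import Mathlib

open NormedSpace ContinuousLinearMap

attribute [local instance 100] LieRing.ofAssociativeRing

/-- The linear span of all brackets `⁅a, b⁆` with `a ∈ A`, `b ∈ B`. -/
def bracketSpan {L : Type*} [LieRing L] [LieAlgebra ℝ L] (A B : Submodule ℝ L) :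
    Submodule ℝ L :=
  Submodule.span ℝ {x | ∃ a ∈ A, ∃ b ∈ B, x = ⁅a, b⁆}

/-- `m` is essential: `ad m` is diagonalizable over `ℝ` and
`ℝ·m + [m,g] + [[m,g],[m,g]] = g`. -/
def Essential {L : Type*} [LieRing L] [LieAlgebra ℝ L] (m : L) : Prop :=
  (⨆ c : ℝ, (LieAlgebra.ad ℝ L m).eigenspace c) = ⊤ ∧
    Submodule.span ℝ {m} ⊔ LinearMap.range (LieAlgebra.ad ℝ L m) ⊔
      bracketSpan (LinearMap.range (LieAlgebra.ad ℝ L m))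
        (LinearMap.range (LieAlgebra.ad ℝ L m)) = ⊤

/-- If `T φ = 0`, then `exp ℂ T φ = φ`. -/
lemma exp_apply_eq_self_of_apply_eq_zero
    {H : Type*} [NormedAddCommGroup H] [InnerProductSpace ℂ H] [CompleteSpace H]
    (T : H →L[ℂ] H) (φ : H) (h : T φ = 0) : exp T φ = φ := by
  have hs : Summable fun n : ℕ => ((Nat.factorial n : ℂ))⁻¹ • T ^ n := expSeries_summable' T
  have : exp T φ = ∑' n : ℕ, (((Nat.factorial n : ℂ))⁻¹ • T ^ n) φ := by
    rw [exp_eq_tsum ℂ]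
    exact ((ContinuousLinearMap.apply ℂ H φ).map_tsum hs)
  rw [this, tsum_eq_single 0]
  · simp
  · intro n hn
    obtain ⟨k, rfl⟩ := Nat.exists_eq_succ_of_ne_zero hn
    simp [pow_succ, ContinuousLinearMap.smul_apply, ContinuousLinearMap.mul_apply, h]

/-- Invariance under the one-parameter group implies the generator kills the vector. -/
lemma apply_eq_zero_of_exp_invariant
    {H : Type*} [NormedAddCommGroup H] [InnerProductSpace ℂ H] [CompleteSpace H]
    (T : H →L[ℂ] H) (φ : H) (hφ : ∀ t : ℝ, exp ((t : ℂ) • T) φ = φ) : T φ = 0 := by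
  have h1 : ∀ t : ℝ, exp (t • T) φ = φ := by
    intro t
    have : exp (t • T) = exp ((t : ℂ) • T) := by
      norm_num [Complex.coe_smul]
    rw [this]; exact hφ t
  set ev : (H →L[ℂ] H) →L[ℝ] H :=
    ((ContinuousLinearMap.apply ℂ H φ).restrictScalars ℝ) with hev
  have hd : HasDerivAt (fun t : ℝ => ev (exp (t • T)))
      (ev (exp ((0:ℝ) • T) * T)) 0 :=
    ev.hasFDerivAt.comp_hasDerivAt 0 (hasDerivAt_exp_smul_const T (0:ℝ))
  have hc : HasDerivAt (fun t : ℝ => ev (exp (t • T))) 0 0 := by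
    have : (fun t : ℝ => ev (exp (t • T))) = fun _ => φ := funext fun t => h1 t
    rw [this]; exact hasDerivAt_const 0 φ
  have := hd.unique hc
  simpa [hev] using this

/-- An eigenvector of a skew-adjoint operator with nonzero real eigenvalue vanishes. -/
lemma eigenvector_eq_zero_of_skewAdjoint
    {H : Type*} [NormedAddCommGroup H] [InnerProductSpace ℂ H] [CompleteSpace H]
    (T : H →L[ℂ] H) (hT : adjoint T = -T) (ψ : H) (c : ℝ) (hc : c ≠ 0)
    (h : T ψ = (c : ℂ) • ψ) : ψ = 0 := by
  have h1 : inner ℂ (adjoint T ψ) ψ = (inner ℂ ψ (T ψ) : ℂ) :=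
    ContinuousLinearMap.adjoint_inner_left T ψ ψ
  rw [hT] at h1
  simp only [ContinuousLinearMap.neg_apply, h, inner_smul_left, inner_smul_right,
    inner_neg_left, Complex.conj_ofReal] at h1
  have h2 : ((2 * c : ℝ) : ℂ) * inner ℂ ψ ψ = 0 := by push_cast; linear_combination -h1
  have h3 : (inner ℂ ψ ψ : ℂ) = 0 := by
    rcases mul_eq_zero.1 h2 with h | h
    · exact absurd (by exact_mod_cast h) (by simpa using hc)
    · exact h
  exact inner_self_eq_zero.1 h3

set_option maxHeartbeats 1000000 in
set_option synthInstance.maxHeartbeats 200000 in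
/-- Corollary 1, bounded-operator version: let `G` be a finite-dimensional real Lie
algebra of bounded skew-adjoint operators on a complex Hilbert space `H`, let `M ∈ G` be
essential, and let `φ` be invariant under `exp(tM)` for all real `t`. Then
`exp(N) φ = φ` for every `N ∈ G`. -/
theorem invariant_of_essential
    {H : Type*} [NormedAddCommGroup H] [InnerProductSpace ℂ H] [CompleteSpace H]
    (G : LieSubalgebra ℝ (H →L[ℂ] H)) [FiniteDimensional ℝ G]
    (hskew : ∀ A ∈ G, adjoint A = -A)
    (M : G) (hM : Essential M)
    (φ : H) (hφ : ∀ t : ℝ, exp ((t : ℂ) • (M : H →L[ℂ] H)) φ = φ) :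
    ∀ N : G, exp (N : H →L[ℂ] H) φ = φ := by
  -- the evaluation map `G →ₗ[ℝ] H`, `A ↦ A φ`
  let f : G →ₗ[ℝ] H :=
    { toFun := fun A => (A : H →L[ℂ] H) φ
      map_add' := by intro A B; simp
      map_smul' := by
        intro r A
        show ((r • A : G) : H →L[ℂ] H) φ = r • ((A : H →L[ℂ] H) φ)
        rfl }
  set S : Submodule ℝ G := LinearMap.ker f with hS
  have hMφ : (M : H →L[ℂ] H) φ = 0 := apply_eq_zero_of_exp_invariant _ φ hφ
  -- eigenvectors with nonzero eigenvalue annihilate φ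
  have key : ∀ (c : ℝ), c ≠ 0 → ∀ X : G, (LieAlgebra.ad ℝ G M) X = c • X →
      (X : H →L[ℂ] H) φ = 0 := by
    intro c hc X hX
    have hb : ((⁅M, X⁆ : G) : H →L[ℂ] H) = ⁅(M : H →L[ℂ] H), (X : H →L[ℂ] H)⁆ := rfl
    have hbr : (M : H →L[ℂ] H) * (X : H →L[ℂ] H) - (X : H →L[ℂ] H) * (M : H →L[ℂ] H)
        = (c : ℝ) • (X : H →L[ℂ] H) := by
      have : (⁅M, X⁆ : G) = c • X := hX
      have := congrArg (fun A : G => (A : H →L[ℂ] H)) this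
      simpa [hb, Ring.lie_def] using this
    have heig : (M : H →L[ℂ] H) ((X : H →L[ℂ] H) φ) = (c : ℂ) • ((X : H →L[ℂ] H) φ) := by
      have := congrArg (fun T : H →L[ℂ] H => T φ) hbr
      simp only [ContinuousLinearMap.sub_apply, ContinuousLinearMap.mul_apply,
        ContinuousLinearMap.smul_apply, hMφ, map_zero, sub_zero] at this
      rw [this, Complex.coe_smul]
    exact eigenvector_eq_zero_of_skewAdjoint _ (hskew _ M.2) _ c hc heig
  -- range (ad M) ≤ S
  have hrange : LinearMap.range (LieAlgebra.ad ℝ G M) ≤ S := by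
    rw [LinearMap.range_eq_map, ← hM.1, Submodule.map_iSup]
    refine iSup_le fun c => ?_
    rintro Y ⟨X, hX, rfl⟩
    have hX' : (LieAlgebra.ad ℝ G M) X = c • X := Module.End.mem_eigenspace_iff.1 hX
    rw [hS, LinearMap.mem_ker]
    rcases eq_or_ne c 0 with h0 | h0
    · rw [hX', h0, zero_smul]; exact map_zero f
    · rw [hX']
      have := key c h0 X hX'
      show ((c • X : G) : H →L[ℂ] H) φ = 0
      have h2 : ((c • X : G) : H →L[ℂ] H) φ = c • ((X : H →L[ℂ] H) φ) := rfl
      rw [h2, this, smul_zero]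
  have hMS : M ∈ S := by rw [hS, LinearMap.mem_ker]; exact hMφ
  -- brackets of elements of S are in S
  have hbrS : ∀ a ∈ S, ∀ b ∈ S, (⁅a, b⁆ : G) ∈ S := by
    intro a ha b hb
    rw [hS, LinearMap.mem_ker] at ha hb ⊢
    show ((⁅a, b⁆ : G) : H →L[ℂ] H) φ = 0
    have : ((⁅a, b⁆ : G) : H →L[ℂ] H) = ⁅(a : H →L[ℂ] H), (b : H →L[ℂ] H)⁆ := rfl
    rw [this, Ring.lie_def]
    have ha' : (a : H →L[ℂ] H) φ = 0 := ha
    have hb' : (b : H →L[ℂ] H) φ = 0 := hb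
    simp [ContinuousLinearMap.sub_apply, ContinuousLinearMap.mul_apply, ha', hb']
  -- conclude S = ⊤
  have hstot : S = ⊤ := by
    rw [← top_le_iff, ← hM.2]
    refine sup_le (sup_le ?_ hrange) ?_
    · rw [Submodule.span_le, Set.singleton_subset_iff]; exact hMS
    · rw [bracketSpan, Submodule.span_le]
      rintro x ⟨a, ha, b, hb, rfl⟩
      exact hbrS a (hrange ha) b (hrange hb)
  intro N
  have hN : N ∈ S := hstot ▸ Submodule.mem_top
  exact exp_apply_eq_self_of_apply_eq_zero _ φ (by rw [hS, LinearMap.mem_ker] at hN; exact hN)
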